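/- Let {ε_t} be IID(0, σ²) and let ψ_i, π_j, ψ̂_i, π̂_j be real sequences, with the hatted sequences being random variables independent of {ε_t}. With P = T+h−1+r and X_{T+h} = Σ_{i=0}^{P} ψ_i ε_{T+h−i}, X̂_{T+h} = Σ_{i=h}^{P} Σ_{j=0}^{P−i} Σ_{k=0}^{P−i−j} ψ̂_i π̂_j ψ_k ε_{T+h−i−j−k}, the mean square error E[(X_{T+h} − X̂_{T+h})²] equals σ² Σ_{i=0}^{h−1} ψ_i² + σ²[Σ_{i=h}^{P} ψ_i² − 2 Σ_{i=h}^{P} Σ_{j=0}^{P−i} Σ_{k=0}^{P−i−j} ψ_{i+j+k} ψ_k E[ψ̂_i π̂_j] + Σ_{i=h}^{P} Σ_{j=0}^{P−i} Σ_{k=0}^{P−i−j} Σ_{i'=h}^{P} Σ_{j'=0}^{P−i'} Σ_{k'=0}^{P−i'−j'} ψ_k ψ_{k'} E[ψ̂_i π̂_j ψ̂_{i'} π̂_{j'}] δ_{i+j+k, i'+j'+k'}]. -/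

import Mathlib

open MeasureTheory Finset

lemma aux_bilin {Ω : Type*} {m0 : MeasurableSpace Ω} (μ : Measure Ω)
    {A B : Type*} (sA : Finset A) (sB : Finset B)
    (a : A → Ω → ℝ) (b : B → Ω → ℝ) (τ : A → ℤ) (τ' : B → ℤ) (ε : ℤ → Ω → ℝ) (σ2 : ℝ)
    (hkey : ∀ α β, Integrable (fun ω => (a α ω * b β ω) * (ε (τ α) ω * ε (τ' β) ω)) μ ∧
       ∫ ω, (a α ω * b β ω) * (ε (τ α) ω * ε (τ' β) ω) ∂μ
         = (∫ ω, a α ω * b β ω ∂μ) * (σ2 * if τ α = τ' β then (1:ℝ) else 0)) :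
    Integrable (fun ω => (∑ α ∈ sA, a α ω * ε (τ α) ω) * (∑ β ∈ sB, b β ω * ε (τ' β) ω)) μ ∧
    ∫ ω, (∑ α ∈ sA, a α ω * ε (τ α) ω) * (∑ β ∈ sB, b β ω * ε (τ' β) ω) ∂μ
      = ∑ α ∈ sA, ∑ β ∈ sB,
          (∫ ω, a α ω * b β ω ∂μ) * (σ2 * if τ α = τ' β then (1:ℝ) else 0) := by
  have hfe : (fun ω => (∑ α ∈ sA, a α ω * ε (τ α) ω) * (∑ β ∈ sB, b β ω * ε (τ' β) ω))
      = fun ω => ∑ α ∈ sA, ∑ β ∈ sB, (a α ω * b β ω) * (ε (τ α) ω * ε (τ' β) ω) := by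
    funext ω
    rw [Finset.sum_mul_sum]
    exact Finset.sum_congr rfl fun α _ => Finset.sum_congr rfl fun β _ => by ring
  rw [hfe]
  constructor
  · exact integrable_finset_sum _ fun α _ => integrable_finset_sum _ fun β _ => (hkey α β).1
  · rw [integral_finset_sum _ fun α _ => integrable_finset_sum _ fun β _ => (hkey α β).1]
    refine Finset.sum_congr rfl fun α _ => ?_
    rw [integral_finset_sum _ fun β _ => (hkey α β).1]
    exact Finset.sum_congr rfl fun β _ => (hkey α β).2

/-- Total forecasting error decomposition: with IID innovations independent of the
estimated coefficients `ψ̂, π̂`, `P = T+h−1+r`, `X_{T+h} = ∑_{i=0}^{P} ψ_i ε_{T+h−i}` and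
`X̂_{T+h} = ∑_{i=h}^{P} ∑_{j=0}^{P−i} ∑_{k=0}^{P−i−j} ψ̂_i π̂_j ψ_k ε_{T+h−i−j−k}`,
the MSFE `E[(X_{T+h} − X̂_{T+h})²]` equals the characteristic error `σ² ∑_{i<h} ψ_i²` plus
the estimation-based error. -/
theorem stmt_17 {Ω : Type*} {m0 : MeasurableSpace Ω} (μ : Measure Ω) [IsProbabilityMeasure μ]
    (ε : ℤ → Ω → ℝ) (σ2 : ℝ)
    (hεmeas : ∀ t, Measurable (ε t))
    (hL2 : ∀ t, MemLp (ε t) 2 μ)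
    (hmean : ∀ t, ∫ ω, ε t ω ∂μ = 0)
    (hvar : ∀ t, ∫ ω, (ε t ω) ^ 2 ∂μ = σ2)
    (hiid : ProbabilityTheory.iIndepFun ε μ)
    (hident : ∀ s t, ProbabilityTheory.IdentDistrib (ε s) (ε t) μ μ)
    (ψ π : ℕ → ℝ) (ψhat πhat : ℕ → Ω → ℝ)
    (mhat : MeasurableSpace Ω) (hmhat : mhat ≤ m0)
    (hψhat : ∀ i, Measurable[mhat] (ψhat i)) (hπhat : ∀ j, Measurable[mhat] (πhat j))
    (hindep : ProbabilityTheory.Indep mhat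
      (⨆ t : ℤ, MeasurableSpace.comap (ε t) inferInstance) μ)
    (hint2 : ∀ i j, Integrable (fun ω => ψhat i ω * πhat j ω) μ)
    (hint4 : ∀ i j i' j',
      Integrable (fun ω => ψhat i ω * πhat j ω * ψhat i' ω * πhat j' ω) μ)
    (T h r : ℕ) (hh : 1 ≤ h) (P : ℕ) (hP : P = T + h - 1 + r)
    (X Xhat : Ω → ℝ)
    (hX : ∀ ω, X ω = ∑ i ∈ range (P + 1), ψ i * ε ((T : ℤ) + h - i) ω)
    (hXhat : ∀ ω, Xhat ω = ∑ i ∈ Icc h P, ∑ j ∈ range (P - i + 1), ∑ k ∈ range (P - i - j + 1),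
      ψhat i ω * πhat j ω * ψ k * ε ((T : ℤ) + h - i - j - k) ω) :
    ∫ ω, (X ω - Xhat ω) ^ 2 ∂μ
      = σ2 * ∑ i ∈ range h, (ψ i) ^ 2
        + σ2 * (∑ i ∈ Icc h P, (ψ i) ^ 2
          - 2 * ∑ i ∈ Icc h P, ∑ j ∈ range (P - i + 1), ∑ k ∈ range (P - i - j + 1),
              ψ (i + j + k) * ψ k * ∫ ω, ψhat i ω * πhat j ω ∂μ
          + ∑ i ∈ Icc h P, ∑ j ∈ range (P - i + 1), ∑ k ∈ range (P - i - j + 1),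
            ∑ i' ∈ Icc h P, ∑ j' ∈ range (P - i' + 1), ∑ k' ∈ range (P - i' - j' + 1),
              ψ k * ψ k' * (∫ ω, ψhat i ω * πhat j ω * ψhat i' ω * πhat j' ω ∂μ)
                * (if i + j + k = i' + j' + k' then (1 : ℝ) else 0)) := by
  classical
  -- basic integrability facts about the innovations
  have hεint : ∀ t, Integrable (ε t) μ := fun t => (hL2 t).integrable one_le_two
  have hεε_int : ∀ s t : ℤ, Integrable (fun ω => ε s ω * ε t ω) μ := by
    intro s t
    rcases eq_or_ne s t with rfl | hne
    · have := (hL2 s).integrable_sq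
      refine this.congr (Filter.Eventually.of_forall fun ω => ?_)
      ring
    · exact (hiid.indepFun hne).integrable_mul (hεint s) (hεint t)
  have hεε : ∀ s t : ℤ, ∫ ω, ε s ω * ε t ω ∂μ = σ2 * (if s = t then (1:ℝ) else 0) := by
    intro s t
    rcases eq_or_ne s t with rfl | hne
    · rw [if_pos rfl, mul_one, ← hvar s]
      refine integral_congr_ae (Filter.Eventually.of_forall fun ω => ?_)
      ring
    · rw [if_neg hne, mul_zero]
      have h2 := (hiid.indepFun hne).integral_fun_mul_eq_mul_integral (hεint s).1 (hεint t).1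
      calc ∫ ω, ε s ω * ε t ω ∂μ = (∫ ω, ε s ω ∂μ) * ∫ ω, ε t ω ∂μ := h2
        _ = 0 := by rw [hmean s, zero_mul]
  -- each ε t is measurable w.r.t. the sup σ-algebra
  have hsup : ∀ t : ℤ, Measurable[⨆ u : ℤ, MeasurableSpace.comap (ε u) inferInstance] (ε t) :=
    fun t => measurable_iff_comap_le.2
      (le_iSup (fun u : ℤ => MeasurableSpace.comap (ε u) inferInstance) t)
  -- the key computation: expectation of coefficient times product of innovations
  have hkeyC : ∀ (c : Ω → ℝ), Measurable[mhat] c → Integrable c μ → ∀ s t : ℤ,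
      Integrable (fun ω => c ω * (ε s ω * ε t ω)) μ ∧
      ∫ ω, c ω * (ε s ω * ε t ω) ∂μ
        = (∫ ω, c ω ∂μ) * (σ2 * if s = t then (1:ℝ) else 0) := by
    intro c hc hci s t
    have hmul : Measurable[⨆ u : ℤ, MeasurableSpace.comap (ε u) inferInstance]
        (fun ω => ε s ω * ε t ω) := (hsup s).mul (hsup t)
    have hif : ProbabilityTheory.IndepFun c (fun ω => ε s ω * ε t ω) μ :=
      ProbabilityTheory.indep_of_indep_of_le_right
        (ProbabilityTheory.indep_of_indep_of_le_left hindep (measurable_iff_comap_le.1 hc))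
        (measurable_iff_comap_le.1 hmul)
    refine ⟨hif.integrable_mul hci (hεε_int s t), ?_⟩
    have h2 := hif.integral_fun_mul_eq_mul_integral hci.1 (hεε_int s t).1
    calc ∫ ω, c ω * (ε s ω * ε t ω) ∂μ
        = (∫ ω, c ω ∂μ) * ∫ ω, ε s ω * ε t ω ∂μ := h2
      _ = (∫ ω, c ω ∂μ) * (σ2 * if s = t then (1:ℝ) else 0) := by rw [hεε s t]
  -- index set for the forecast
  set Shat : Finset ((_ : ℕ) × (_ : ℕ) × ℕ) :=
    (Icc h P).sigma fun i => (range (P - i + 1)).sigma fun j => range (P - i - j + 1) with hShat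
  have hmemS : ∀ p : (_ : ℕ) × (_ : ℕ) × ℕ, p ∈ Shat →
      h ≤ p.1 ∧ p.1 ≤ P ∧ p.2.1 ≤ P - p.1 ∧ p.2.2 ≤ P - p.1 - p.2.1 := by
    intro p hp
    rw [hShat, Finset.mem_sigma, Finset.mem_sigma, Finset.mem_Icc, Finset.mem_range,
      Finset.mem_range] at hp
    omega
  -- representation of Xhat as a single sum
  have hXhat' : ∀ ω, Xhat ω = ∑ p ∈ Shat,
      (ψhat p.1 ω * πhat p.2.1 ω * ψ p.2.2) * ε ((T : ℤ) + h - p.1 - p.2.1 - p.2.2) ω := by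
    intro ω
    rw [hXhat ω, hShat, Finset.sum_sigma]
    refine Finset.sum_congr rfl fun i _ => ?_
    rw [Finset.sum_sigma]
  -- the three second moments
  obtain ⟨intXX, eXX⟩ := aux_bilin μ (range (P+1)) (range (P+1))
    (fun i _ => ψ i) (fun i _ => ψ i)
    (fun i => (T : ℤ) + h - i) (fun i => (T : ℤ) + h - i) ε σ2
    (fun α β => hkeyC (fun _ => ψ α * ψ β) measurable_const (integrable_const _) _ _)
  obtain ⟨intXH, eXH⟩ := aux_bilin μ (range (P+1)) Shat
    (fun i _ => ψ i) (fun p ω => ψhat p.1 ω * πhat p.2.1 ω * ψ p.2.2)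
    (fun i => (T : ℤ) + h - i) (fun p => (T : ℤ) + h - p.1 - p.2.1 - p.2.2) ε σ2
    (by
      intro α p
      refine hkeyC (fun ω => ψ α * (ψhat p.1 ω * πhat p.2.1 ω * ψ p.2.2)) ?_ ?_ _ _
      · exact measurable_const.mul (((hψhat p.1).mul (hπhat p.2.1)).mul measurable_const)
      · have : (fun ω => ψ α * (ψhat p.1 ω * πhat p.2.1 ω * ψ p.2.2))
            = fun ω => (ψ α * ψ p.2.2) * (ψhat p.1 ω * πhat p.2.1 ω) := by
          funext ω; ring
        rw [this]
        exact (hint2 p.1 p.2.1).const_mul _)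
  obtain ⟨intHH, eHH⟩ := aux_bilin μ Shat Shat
    (fun p ω => ψhat p.1 ω * πhat p.2.1 ω * ψ p.2.2)
    (fun p ω => ψhat p.1 ω * πhat p.2.1 ω * ψ p.2.2)
    (fun p => (T : ℤ) + h - p.1 - p.2.1 - p.2.2)
    (fun p => (T : ℤ) + h - p.1 - p.2.1 - p.2.2) ε σ2
    (by
      intro p q
      refine hkeyC (fun ω => (ψhat p.1 ω * πhat p.2.1 ω * ψ p.2.2)
        * (ψhat q.1 ω * πhat q.2.1 ω * ψ q.2.2)) ?_ ?_ _ _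
      · exact (((hψhat p.1).mul (hπhat p.2.1)).mul measurable_const).mul
          (((hψhat q.1).mul (hπhat q.2.1)).mul measurable_const)
      · have : (fun ω => (ψhat p.1 ω * πhat p.2.1 ω * ψ p.2.2)
            * (ψhat q.1 ω * πhat q.2.1 ω * ψ q.2.2))
            = fun ω => (ψ p.2.2 * ψ q.2.2)
              * (ψhat p.1 ω * πhat p.2.1 ω * ψhat q.1 ω * πhat q.2.1 ω) := by
          funext ω; ring
        rw [this]
        exact (hint4 p.1 p.2.1 q.1 q.2.1).const_mul _)
  -- simplify the XX term
  have eXX2 : (∑ i ∈ range (P+1), ∑ i' ∈ range (P+1),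
      (∫ _ω, ψ i * ψ i' ∂μ) * (σ2 * if ((T:ℤ) + h - i) = ((T:ℤ) + h - i') then (1:ℝ) else 0))
      = σ2 * (∑ i ∈ range h, ψ i ^ 2 + ∑ i ∈ Icc h P, ψ i ^ 2) := by
    have hstep : ∀ i ∈ range (P+1), (∑ i' ∈ range (P+1),
        (∫ _ω, ψ i * ψ i' ∂μ) * (σ2 * if ((T:ℤ) + h - i) = ((T:ℤ) + h - i') then (1:ℝ) else 0))
        = σ2 * ψ i ^ 2 := by
      intro i hi
      rw [Finset.sum_eq_single i]
      · rw [if_pos rfl, mul_one, integral_const]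
        simp [pow_two]; ring
      · intro i' _ hne
        rw [if_neg (by omega), mul_zero, mul_zero]
      · intro hni; exact absurd hi hni
    rw [Finset.sum_congr rfl hstep, ← Finset.mul_sum]
    congr 1
    have hhP : h ≤ P + 1 := by omega
    rw [range_eq_Ico, ← Finset.sum_Ico_consecutive _ (Nat.zero_le h) hhP, ← range_eq_Ico,
      Finset.Ico_add_one_right_eq_Icc]
  -- simplify the cross term
  have eXH2 : (∑ i ∈ range (P+1), ∑ p ∈ Shat,
      (∫ ω, ψ i * (ψhat p.1 ω * πhat p.2.1 ω * ψ p.2.2) ∂μ)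
        * (σ2 * if ((T:ℤ) + h - i) = ((T:ℤ) + h - p.1 - p.2.1 - p.2.2) then (1:ℝ) else 0))
      = σ2 * ∑ i ∈ Icc h P, ∑ j ∈ range (P - i + 1), ∑ k ∈ range (P - i - j + 1),
          ψ (i + j + k) * ψ k * ∫ ω, ψhat i ω * πhat j ω ∂μ := by
    rw [Finset.sum_comm]
    have hstep : ∀ p ∈ Shat, (∑ i ∈ range (P+1),
        (∫ ω, ψ i * (ψhat p.1 ω * πhat p.2.1 ω * ψ p.2.2) ∂μ)
          * (σ2 * if ((T:ℤ) + h - i) = ((T:ℤ) + h - p.1 - p.2.1 - p.2.2) then (1:ℝ) else 0))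
        = σ2 * (ψ (p.1 + p.2.1 + p.2.2) * ψ p.2.2 * ∫ ω, ψhat p.1 ω * πhat p.2.1 ω ∂μ) := by
      intro p hp
      obtain ⟨h1, h2, h3, h4⟩ := hmemS p hp
      rw [Finset.sum_eq_single (p.1 + p.2.1 + p.2.2)]
      · rw [if_pos (by push_cast; ring), mul_one]
        have hI : (fun ω => ψ (p.1 + p.2.1 + p.2.2) * (ψhat p.1 ω * πhat p.2.1 ω * ψ p.2.2))
            = fun ω => (ψ (p.1 + p.2.1 + p.2.2) * ψ p.2.2) * (ψhat p.1 ω * πhat p.2.1 ω) := by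
          funext ω; ring
        rw [hI, integral_const_mul]
        ring
      · intro i' _ hne
        rw [if_neg (by omega), mul_zero, mul_zero]
      · intro hni
        exact absurd (Finset.mem_range.2 (by omega)) hni
    rw [Finset.sum_congr rfl hstep, ← Finset.mul_sum]
    congr 1
    rw [hShat, Finset.sum_sigma]
    refine Finset.sum_congr rfl fun i _ => ?_
    rw [Finset.sum_sigma]
  -- simplify the XhatXhat term
  have eHH2 : (∑ p ∈ Shat, ∑ q ∈ Shat,
      (∫ ω, (ψhat p.1 ω * πhat p.2.1 ω * ψ p.2.2) * (ψhat q.1 ω * πhat q.2.1 ω * ψ q.2.2) ∂μ)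
        * (σ2 * if ((T:ℤ) + h - p.1 - p.2.1 - p.2.2) = ((T:ℤ) + h - q.1 - q.2.1 - q.2.2)
            then (1:ℝ) else 0))
      = σ2 * ∑ i ∈ Icc h P, ∑ j ∈ range (P - i + 1), ∑ k ∈ range (P - i - j + 1),
          ∑ i' ∈ Icc h P, ∑ j' ∈ range (P - i' + 1), ∑ k' ∈ range (P - i' - j' + 1),
            ψ k * ψ k' * (∫ ω, ψhat i ω * πhat j ω * ψhat i' ω * πhat j' ω ∂μ)
              * (if i + j + k = i' + j' + k' then (1 : ℝ) else 0) := by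
    have hstep : ∀ p ∈ Shat, ∀ q ∈ Shat,
        (∫ ω, (ψhat p.1 ω * πhat p.2.1 ω * ψ p.2.2) * (ψhat q.1 ω * πhat q.2.1 ω * ψ q.2.2) ∂μ)
          * (σ2 * if ((T:ℤ) + h - p.1 - p.2.1 - p.2.2) = ((T:ℤ) + h - q.1 - q.2.1 - q.2.2)
              then (1:ℝ) else 0)
        = σ2 * (ψ p.2.2 * ψ q.2.2
            * (∫ ω, ψhat p.1 ω * πhat p.2.1 ω * ψhat q.1 ω * πhat q.2.1 ω ∂μ)
            * (if p.1 + p.2.1 + p.2.2 = q.1 + q.2.1 + q.2.2 then (1:ℝ) else 0)) := by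
      intro p _ q _
      have hI : (fun ω => (ψhat p.1 ω * πhat p.2.1 ω * ψ p.2.2)
          * (ψhat q.1 ω * πhat q.2.1 ω * ψ q.2.2))
          = fun ω => (ψ p.2.2 * ψ q.2.2)
            * (ψhat p.1 ω * πhat p.2.1 ω * ψhat q.1 ω * πhat q.2.1 ω) := by
        funext ω; ring
      have hc : (((T:ℤ) + h - p.1 - p.2.1 - p.2.2) = ((T:ℤ) + h - q.1 - q.2.1 - q.2.2))
          ↔ (p.1 + p.2.1 + p.2.2 = q.1 + q.2.1 + q.2.2) := by omega
      rw [hI, integral_const_mul, if_congr hc rfl rfl]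
      ring
    rw [Finset.sum_congr rfl fun p hp => Finset.sum_congr rfl fun q hq => hstep p hp q hq]
    simp_rw [← Finset.mul_sum]
    congr 1
    rw [hShat, Finset.sum_sigma]
    refine Finset.sum_congr rfl fun i _ => ?_
    rw [Finset.sum_sigma]
    refine Finset.sum_congr rfl fun j _ => ?_
    refine Finset.sum_congr rfl fun k _ => ?_
    rw [Finset.sum_sigma]
    refine Finset.sum_congr rfl fun i' _ => ?_
    rw [Finset.sum_sigma]
  -- convert to statements about X and Xhat
  have hfXX : (fun ω => X ω * X ω)
      = fun ω => (∑ i ∈ range (P+1), ψ i * ε ((T:ℤ) + h - i) ω)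
        * (∑ i ∈ range (P+1), ψ i * ε ((T:ℤ) + h - i) ω) := by
    funext ω; rw [hX ω]
  have hfXH : (fun ω => X ω * Xhat ω)
      = fun ω => (∑ i ∈ range (P+1), ψ i * ε ((T:ℤ) + h - i) ω)
        * (∑ p ∈ Shat, (ψhat p.1 ω * πhat p.2.1 ω * ψ p.2.2)
            * ε ((T:ℤ) + h - p.1 - p.2.1 - p.2.2) ω) := by
    funext ω; rw [hX ω, hXhat' ω]
  have hfHH : (fun ω => Xhat ω * Xhat ω)
      = fun ω => (∑ p ∈ Shat, (ψhat p.1 ω * πhat p.2.1 ω * ψ p.2.2)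
            * ε ((T:ℤ) + h - p.1 - p.2.1 - p.2.2) ω)
        * (∑ p ∈ Shat, (ψhat p.1 ω * πhat p.2.1 ω * ψ p.2.2)
            * ε ((T:ℤ) + h - p.1 - p.2.1 - p.2.2) ω) := by
    funext ω; rw [hXhat' ω]
  have intXX' : Integrable (fun ω => X ω * X ω) μ := by rw [hfXX]; exact intXX
  have intXH' : Integrable (fun ω => X ω * Xhat ω) μ := by rw [hfXH]; exact intXH
  have intHH' : Integrable (fun ω => Xhat ω * Xhat ω) μ := by rw [hfHH]; exact intHH
  have eXX' : ∫ ω, X ω * X ω ∂μ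
      = σ2 * (∑ i ∈ range h, ψ i ^ 2 + ∑ i ∈ Icc h P, ψ i ^ 2) := by
    rw [show (∫ ω, X ω * X ω ∂μ) = ∫ ω, (fun ω => X ω * X ω) ω ∂μ from rfl, hfXX]
    rw [eXX]; exact eXX2
  have eXH' : ∫ ω, X ω * Xhat ω ∂μ
      = σ2 * ∑ i ∈ Icc h P, ∑ j ∈ range (P - i + 1), ∑ k ∈ range (P - i - j + 1),
          ψ (i + j + k) * ψ k * ∫ ω, ψhat i ω * πhat j ω ∂μ := by
    rw [show (∫ ω, X ω * Xhat ω ∂μ) = ∫ ω, (fun ω => X ω * Xhat ω) ω ∂μ from rfl, hfXH]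
    rw [eXH]; exact eXH2
  have eHH' : ∫ ω, Xhat ω * Xhat ω ∂μ
      = σ2 * ∑ i ∈ Icc h P, ∑ j ∈ range (P - i + 1), ∑ k ∈ range (P - i - j + 1),
          ∑ i' ∈ Icc h P, ∑ j' ∈ range (P - i' + 1), ∑ k' ∈ range (P - i' - j' + 1),
            ψ k * ψ k' * (∫ ω, ψhat i ω * πhat j ω * ψhat i' ω * πhat j' ω ∂μ)
              * (if i + j + k = i' + j' + k' then (1 : ℝ) else 0) := by
    rw [show (∫ ω, Xhat ω * Xhat ω ∂μ) = ∫ ω, (fun ω => Xhat ω * Xhat ω) ω ∂μ from rfl, hfHH]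
    rw [eHH]; exact eHH2
  -- expand the square and conclude
  have hexp : ∫ ω, (X ω - Xhat ω) ^ 2 ∂μ
      = ∫ ω, X ω * X ω ∂μ - 2 * ∫ ω, X ω * Xhat ω ∂μ + ∫ ω, Xhat ω * Xhat ω ∂μ := by
    have h1 : ∫ ω, (X ω - Xhat ω) ^ 2 ∂μ
        = ∫ ω, (X ω * X ω - 2 * (X ω * Xhat ω) + Xhat ω * Xhat ω) ∂μ :=
      integral_congr_ae (Filter.Eventually.of_forall fun ω => by ring)
    have hB : Integrable (fun ω => 2 * (X ω * Xhat ω)) μ := intXH'.const_mul 2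
    have hA : Integrable (fun ω => X ω * X ω - 2 * (X ω * Xhat ω)) μ := intXX'.sub hB
    rw [h1, integral_add hA intHH', integral_sub intXX' hB, integral_const_mul]
  rw [hexp, eXX', eXH', eHH']
  ring
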